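/- Let R be a commutative ring with a translation-invariant partial order on its additive group such that the positive cone R⁺ is closed under multiplication. If R is archimedean and localizable, then r² ∈ R⁺ for every r ∈ R; in particular R is a partially ordered commutative ring. -/

import Mathlib

open Finset

private lemma bin1 {R : Type*} [CommRing R] (u v : R) (m : ℕ) :
    ∑ a ∈ range (m+1), ((m.choose a : ℕ) : R) * (u^a * v^(m-a)) = (u+v)^m := by
  rw [add_pow]
  exact Finset.sum_congr rfl fun a _ => by ring

private lemma bin2 {R : Type*} [CommRing R] (u v : R) (m : ℕ) :
    ∑ a ∈ range (m+2), ((a * (m+1).choose a : ℕ) : R) * (u^a * v^(m+1-a))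
      = ((m+1 : ℕ) : R) * (u * (u+v)^m) := by
  rw [Finset.sum_range_succ' (fun a => ((a * (m+1).choose a : ℕ) : R) * (u^a * v^(m+1-a))) (m+1)]
  have h : ∀ i ∈ range (m+1),
      (((i+1) * (m+1).choose (i+1) : ℕ) : R) * (u^(i+1) * v^(m+1-(i+1)))
        = (((m+1 : ℕ) : R) * u) * (((m.choose i : ℕ) : R) * (u^i * v^(m-i))) := by
    intro i _
    have h0 : (m+1) * m.choose i = (m+1).choose (i+1) * (i+1) := by
      simpa [Nat.succ_eq_add_one] using Nat.add_one_mul_choose_eq m i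
    have hc : (i+1) * (m+1).choose (i+1) = (m+1) * m.choose i := by
      rw [h0]; ring
    have hs : m + 1 - (i+1) = m - i := by omega
    rw [hc, hs]
    push_cast
    ring
  rw [Finset.sum_congr rfl h, ← Finset.mul_sum, bin1]
  simp
  ring

private lemma bin3 {R : Type*} [CommRing R] (u v : R) (m : ℕ) :
    ∑ a ∈ range (m+3), ((a * (a-1) * (m+2).choose a : ℕ) : R) * (u^a * v^(m+2-a))
      = (((m+2)*(m+1) : ℕ) : R) * (u^2 * (u+v)^m) := by
  rw [Finset.sum_range_succ' (fun a => ((a * (a-1) * (m+2).choose a : ℕ) : R) * (u^a * v^(m+2-a))) (m+2)]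
  have h : ∀ i ∈ range (m+2),
      (((i+1) * ((i+1)-1) * (m+2).choose (i+1) : ℕ) : R) * (u^(i+1) * v^(m+2-(i+1)))
        = (((m+2 : ℕ) : R) * u) * ((i * (m+1).choose i : ℕ) * (u^i * v^(m+1-i))) := by
    intro i _
    have h0 : (m+2) * (m+1).choose i = (m+2).choose (i+1) * (i+1) := by
      simpa [Nat.succ_eq_add_one] using Nat.add_one_mul_choose_eq (m+1) i
    have hc : (i+1) * ((i+1)-1) * (m+2).choose (i+1) = (m+2) * (i * (m+1).choose i) := by
      have : (i+1) - 1 = i := by omega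
      rw [this]
      calc (i+1) * i * (m+2).choose (i+1) = i * ((m+2).choose (i+1) * (i+1)) := by ring
      _ = i * ((m+2) * (m+1).choose i) := by rw [← h0]
      _ = (m+2) * (i * (m+1).choose i) := by ring
    have hs : m + 2 - (i+1) = m + 1 - i := by omega
    rw [hc, hs]
    push_cast
    ring
  rw [Finset.sum_congr rfl h, ← Finset.mul_sum, bin2]
  simp
  ring

private lemma coef_le (n a : ℕ) : 4*a*(2*n+2) + 1 ≤ 4*a*(a-1) + (2*n+3)^2 := by
  rcases a with _ | b
  · simpa using Nat.one_le_pow 2 (2*n+3) (by omega)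
  · have hb : (b+1) - 1 = b := by omega
    rw [hb]
    rcases le_or_gt b n with hle | hlt
    · obtain ⟨c, rfl⟩ : ∃ c, n = b + c := ⟨n - b, by omega⟩
      nlinarith
    · obtain ⟨c, rfl⟩ : ∃ c, b = n + 1 + c := ⟨b - n - 1, by omega⟩
      nlinarith

private lemma master {R : Type*} [CommRing R] (s r : R) (n : ℕ) :
    ∑ a ∈ range (2*n+4),
        (((4*a*(a-1) + (2*n+3)^2 - (4*a*(2*n+2) + 1)) * (2*n+3).choose a : ℕ) : R)
          * ((s+r)^a * (s-r)^(2*n+3-a))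
      = ((4*(2*n+2)*2^(2*n+1) : ℕ) : R)
          * (s^(2*n+1) * (((2*n+3 : ℕ) : R) * r^2 + s^2)) := by
  have key : ∀ a ∈ range (2*n+4),
      (((4*a*(a-1) + (2*n+3)^2 - (4*a*(2*n+2) + 1)) * (2*n+3).choose a : ℕ) : R)
          * ((s+r)^a * (s-r)^(2*n+3-a))
        = 4 * (((a * (a-1) * (2*n+3).choose a : ℕ) : R) * ((s+r)^a * (s-r)^(2*n+3-a)))
          + (((2*n+3)^2 : ℕ) : R) * ((((2*n+3).choose a : ℕ) : R) * ((s+r)^a * (s-r)^(2*n+3-a)))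
          - ((4*(2*n+2) : ℕ) : R) * (((a * (2*n+3).choose a : ℕ) : R) * ((s+r)^a * (s-r)^(2*n+3-a)))
          - (((2*n+3).choose a : ℕ) : R) * ((s+r)^a * (s-r)^(2*n+3-a)) := by
    intro a _
    rw [Nat.cast_mul, Nat.cast_sub (coef_le n a)]
    push_cast
    ring
  rw [Finset.sum_congr rfl key]
  rw [Finset.sum_sub_distrib, Finset.sum_sub_distrib, Finset.sum_add_distrib,
      ← Finset.mul_sum, ← Finset.mul_sum, ← Finset.mul_sum]
  have e1 : ∑ a ∈ range (2*n+4), (((2*n+3).choose a : ℕ) : R) * ((s+r)^a * (s-r)^(2*n+3-a))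
      = ((s+r)+(s-r))^(2*n+3) := by
    have h := bin1 (s+r) (s-r) (2*n+3)
    rw [show 2*n+3+1 = 2*n+4 from by omega] at h
    exact h
  have e2 : ∑ a ∈ range (2*n+4), ((a * (2*n+3).choose a : ℕ) : R) * ((s+r)^a * (s-r)^(2*n+3-a))
      = ((2*n+3 : ℕ) : R) * ((s+r) * ((s+r)+(s-r))^(2*n+2)) := by
    have h := bin2 (s+r) (s-r) (2*n+2)
    rw [show 2*n+2+2 = 2*n+4 from by omega, show 2*n+2+1 = 2*n+3 from by omega] at h
    exact h
  have e3 : ∑ a ∈ range (2*n+4), ((a * (a-1) * (2*n+3).choose a : ℕ) : R) * ((s+r)^a * (s-r)^(2*n+3-a))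
      = (((2*n+3)*(2*n+2) : ℕ) : R) * ((s+r)^2 * ((s+r)+(s-r))^(2*n+1)) := by
    have h := bin3 (s+r) (s-r) (2*n+1)
    rw [show 2*n+1+3 = 2*n+4 from by omega, show 2*n+1+2 = 2*n+3 from by omega] at h
    exact h
  rw [e1, e2, e3]
  have hb : (s+r)+(s-r) = 2*s := by ring
  rw [hb]
  rw [show (2:R)*s = 2*s from rfl]
  rw [mul_pow, mul_pow, mul_pow]
  push_cast
  rw [show 2*n+2 = (2*n+1)+1 from rfl, show 2*n+3 = (2*n+1)+2 from rfl]
  rw [pow_succ (2:R) (2*n+1), pow_add (2:R) (2*n+1) 2,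
      pow_succ s (2*n+1), pow_add s (2*n+1) 2]
  ring

/-- If the positive cone is closed under multiplication and the ring is archimedean
and localizable, then all squares are positive. -/
theorem stmt_3 (R : Type*) [CommRing R] [PartialOrder R]
    [CovariantClass R R (· + ·) (· ≤ ·)]
    (hmul : ∀ a b : R, 0 ≤ a → 0 ≤ b → 0 ≤ a * b)
    (harch : ∀ g h : R, (∀ k : ℕ, 1 ≤ k → 0 ≤ (k : R) * g + h) → 0 ≤ g)
    (hloc : ∀ r : R, ∃ s : R, (∃ t : R, 0 ≤ t ∧ s = 1 + t) ∧
      (∀ r' : R, 0 ≤ r' * s → 0 ≤ r') ∧ -s ≤ r ∧ r ≤ s) :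
    ∀ r : R, 0 ≤ r ^ 2 := by
  haveI : IsOrderedAddMonoid R :=
    { add_le_add_left := fun a b h c => add_le_add_left h c }
  -- powers of nonnegatives with positive exponent
  have hpow : ∀ x : R, 0 ≤ x → ∀ k : ℕ, 1 ≤ k → 0 ≤ x ^ k := by
    intro x hx k hk
    induction k with
    | zero => exact absurd hk (by omega)
    | succ j ih =>
      rcases Nat.eq_zero_or_pos j with rfl | hj
      · simpa using hx
      · rw [pow_succ]; exact hmul _ _ (ih hj) hx
  -- good localizable bounds
  have hgb : ∀ x : R, ∃ σ : R,
      (∀ y : R, 0 ≤ y * σ → 0 ≤ y) ∧ 0 ≤ σ ∧ 0 ≤ σ - x ∧ 0 ≤ σ + x := by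
    intro x
    obtain ⟨s1, ⟨t1, ht1, rfl⟩, hc1, hl1, hu1⟩ := hloc x
    obtain ⟨s0, ⟨t0, ht0, rfl⟩, hc0, hl0, _⟩ := hloc 0
    have hs0 : (0:R) ≤ 1 + t0 := neg_nonpos.mp hl0
    refine ⟨(1+t1)*(1+t0), ?_, ?_, ?_, ?_⟩
    · intro y hy
      rw [← mul_assoc] at hy
      exact hc1 y (hc0 _ hy)
    · have e : (1+t1)*(1+t0) = (1+t0) + t1*(1+t0) := by ring
      rw [e]; exact add_nonneg hs0 (hmul _ _ ht1 hs0)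
    · have e : (1+t1)*(1+t0) - x = ((1+t1) - x) + (t0 + t1*t0) := by ring
      rw [e]
      exact add_nonneg (sub_nonneg.mpr hu1) (add_nonneg ht0 (hmul _ _ ht1 ht0))
    · have h4 : 0 ≤ (1+t1) + x := by
        have h := sub_nonneg.mpr hl1
        rw [sub_neg_eq_add, add_comm] at h
        exact h
      have e : (1+t1)*(1+t0) + x = ((1+t1) + x) + (t0 + t1*t0) := by ring
      rw [e]
      exact add_nonneg h4 (add_nonneg ht0 (hmul _ _ ht1 ht0))
  -- division by naturals
  have hdiv : ∀ nn : ℕ, 1 ≤ nn → ∀ x : R, 0 ≤ (nn : R) * x → 0 ≤ x := by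
    intro nn hnn x hx
    obtain ⟨σ, _, hσ, hσs, hσa⟩ := hgb x
    apply harch x ((nn:R) * σ)
    intro k _
    have hmod : k % nn < nn := Nat.mod_lt k (by omega)
    have h0 : nn * (k / nn) + k % nn = k := Nat.div_add_mod k nn
    have hcast : (k : R) = (nn:R) * ((k / nn : ℕ) : R) + ((k % nn : ℕ) : R) := by
      conv_lhs => rw [← h0]
      push_cast; ring
    have hdecomp : (k:R) * x + (nn:R) * σ
        = (k / nn) • ((nn:R) * x) + (k % nn) • (x + σ) + (nn - k % nn) • σ := by
      rw [nsmul_eq_mul, nsmul_eq_mul, nsmul_eq_mul, Nat.cast_sub (le_of_lt hmod), hcast]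
      ring
    rw [hdecomp]
    have hxσ : 0 ≤ x + σ := by rw [add_comm]; exact hσa
    exact add_nonneg (add_nonneg (nsmul_nonneg hx _) (nsmul_nonneg hxσ _)) (nsmul_nonneg hσ _)
  intro r
  obtain ⟨s, ⟨t, ht, hst⟩, hcs, hls, hus⟩ := hloc r
  have hu : 0 ≤ s + r := by have := add_le_add_right hls s; simpa using this
  have hv : 0 ≤ s - r := sub_nonneg.mpr hus
  have hcancel : ∀ j : ℕ, ∀ y : R, 0 ≤ y * s ^ j → 0 ≤ y := by
    intro j
    induction j with
    | zero => intro y h; simpa using h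
    | succ i ih =>
      intro y h
      rw [pow_succ, ← mul_assoc] at h
      exact ih y (hcs _ h)
  have hodd : ∀ i : ℕ, 0 ≤ ((2*i+1 : ℕ) : R) * r^2 + s^2 := by
    intro i
    rcases i with _ | j
    · have h1 : 0 ≤ (s+r)*(s+r) + (s-r)*(s-r) :=
        add_nonneg (hmul _ _ hu hu) (hmul _ _ hv hv)
      have h2 : (s+r)*(s+r) + (s-r)*(s-r) = ((2:ℕ):R) * (((2*0+1:ℕ):R) * r^2 + s^2) := by
        push_cast; ring
      rw [h2] at h1
      exact hdiv 2 (by omega) _ h1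
    · have hE : 0 ≤ ∑ a ∈ range (2*j+4),
          (((4*a*(a-1) + (2*j+3)^2 - (4*a*(2*j+2) + 1)) * (2*j+3).choose a : ℕ) : R)
            * ((s+r)^a * (s-r)^(2*j+3-a)) := by
        apply Finset.sum_nonneg
        intro a _
        rw [← nsmul_eq_mul]
        refine nsmul_nonneg ?_ _
        rcases Nat.eq_zero_or_pos a with rfl | hap
        · simpa using hpow _ hv (2*j+3) (by omega)
        · rcases Nat.eq_zero_or_pos (2*j+3-a) with hz | hbp
          · rw [hz, pow_zero, mul_one]; exact hpow _ hu a hap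
          · exact hmul _ _ (hpow _ hu a hap) (hpow _ hv _ hbp)
      rw [master s r j] at hE
      have hone : 1 ≤ 4*(2*j+2)*2^(2*j+1) := by
        have h2p : 1 ≤ 2^(2*j+1) := Nat.one_le_pow _ _ (by omega)
        calc 1 ≤ 2^(2*j+1) := h2p
        _ ≤ 4*(2*j+2)*2^(2*j+1) := Nat.le_mul_of_pos_left _ (by omega)
      have hE2 := hdiv _ hone _ hE
      have hE3 : 0 ≤ ((2*j+3:ℕ):R) * r^2 + s^2 := by
        apply hcancel (2*j+1)
        rw [mul_comm] at hE2
        exact hE2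
      have hc : ((2*(j+1)+1 : ℕ) : R) = ((2*j+3 : ℕ):R) := by push_cast; ring
      rw [hc]
      exact hE3
  apply harch (r^2) (s^2)
  intro k hk
  rcases Nat.even_or_odd k with hke | hko
  · obtain ⟨i, hi⟩ := hke
    obtain ⟨j, rfl⟩ : ∃ j, i = j+1 := ⟨i-1, by omega⟩
    have A := hodd j
    have B := hodd (j+1)
    have hsum0 := add_nonneg A B
    have he : ((2*j+1:ℕ):R) * r^2 + s^2 + (((2*(j+1)+1:ℕ):R) * r^2 + s^2)
        = ((2:ℕ):R) * ((k:R) * r^2 + s^2) := by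
      rw [hi]; push_cast; ring
    rw [he] at hsum0
    exact hdiv 2 (by omega) _ hsum0
  · obtain ⟨i, hi⟩ := hko
    have h := hodd i
    have he : ((2*i+1:ℕ):R) = (k:R) := by rw [hi]
    rwa [he] at h
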